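/- Let (X,T) be a topological dynamical system such that the set M_p of T-periodic measures is dense in M(T), and let s ∈ (0,1). Then {μ ∈ M(T) : liminf_{ε→0⁺} log S_μ(s,ε) / ((s−1) log ε) = 0} is a dense subset of M(T). -/

import Mathlib

open MeasureTheory Filter Topology Metric Set
open scoped ENNReal NNReal

section Defs

variable {X : Type*} [MetricSpace X] [MeasurableSpace X]

/-- The topological support of a Borel measure on a metric space: the set of points all of whose
balls have positive measure. -/
def msupp (μ : Measure X) : Set X := {x : X | ∀ ε > 0, 0 < μ (ball x ε)}

/-- The energy function `I_μ(q, ε) = ∫_{supp μ} μ(B(x,ε))^(q-1) dμ(x)`. -/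
noncomputable def energyI (μ : Measure X) (q ε : ℝ) : ℝ :=
  ∫ x in msupp μ, (μ (ball x ε)).toReal ^ (q - 1) ∂μ

/-- The lower `q`-generalized fractal dimension
`D⁻_μ(q) = liminf_{ε→0⁺} log I_μ(q,ε) / ((q-1) log ε)` (as an extended real number). -/
noncomputable def Dlower (μ : Measure X) (q : ℝ) : EReal :=
  liminf (fun ε : ℝ =>
    ((Real.log (energyI μ q ε) / ((q - 1) * Real.log ε) : ℝ) : EReal)) (𝓝[>] (0 : ℝ))

/-- The upper `q`-generalized fractal dimension
`D⁺_μ(q) = limsup_{ε→0⁺} log I_μ(q,ε) / ((q-1) log ε)` (as an extended real number). -/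
noncomputable def Dupper (μ : Measure X) (q : ℝ) : EReal :=
  limsup (fun ε : ℝ =>
    ((Real.log (energyI μ q ε) / ((q - 1) * Real.log ε) : ℝ) : EReal)) (𝓝[>] (0 : ℝ))

/-- `∫_{supp μ} log μ(B(x,ε)) dμ(x)`, the numerator in the entropy dimension. -/
noncomputable def entNum (μ : Measure X) (ε : ℝ) : ℝ :=
  ∫ x in msupp μ, Real.log (μ (ball x ε)).toReal ∂μ

/-- The lower entropy dimension
`D⁻_μ(1) = liminf_{ε→0⁺} (∫_{supp μ} log μ(B(x,ε)) dμ(x)) / log ε`. -/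
noncomputable def D1lower (μ : Measure X) : EReal :=
  liminf (fun ε : ℝ => ((entNum μ ε / Real.log ε : ℝ) : EReal)) (𝓝[>] (0 : ℝ))

/-- The upper entropy dimension
`D⁺_μ(1) = limsup_{ε→0⁺} (∫_{supp μ} log μ(B(x,ε)) dμ(x)) / log ε`. -/
noncomputable def D1upper (μ : Measure X) : EReal :=
  limsup (fun ε : ℝ => ((entNum μ ε / Real.log ε : ℝ) : EReal)) (𝓝[>] (0 : ℝ))

/-- A measure is `T`-invariant if `μ(T⁻¹ s) = μ s` for every measurable `s`. -/
def IsInvariantMeasure (T : X → X) (μ : Measure X) : Prop :=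
  ∀ s : Set X, MeasurableSet s → μ (T ⁻¹' s) = μ s

/-- `M(T)`: the set of `T`-invariant Borel probability measures on `X`. -/
def invSet (T : X → X) : Set (ProbabilityMeasure X) :=
  {μ : ProbabilityMeasure X | IsInvariantMeasure T μ.toMeasure}

/-- A `T`-periodic measure: `μ = (1/k) ∑_{i<k} δ_{T^i x}` for a `T`-periodic point `x`
of period `k`. -/
def IsPeriodicMeasure (T : X → X) (μ : ProbabilityMeasure X) : Prop :=
  ∃ (x : X) (k : ℕ), 0 < k ∧ T^[k] x = x ∧
    μ.toMeasure = (k : ℝ≥0∞)⁻¹ • ∑ i ∈ Finset.range k, Measure.dirac (T^[i] x)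

/-- The upper Hausdorff dimension of a measure:
`dim_H^+(μ) = inf {dimH E | E Borel, μ(X \ E) = 0}`. -/
noncomputable def dimHplus (μ : Measure X) : ℝ≥0∞ :=
  ⨅ (E : Set X) (_ : MeasurableSet E) (_ : μ Eᶜ = 0), dimH E

/-- The lower Hausdorff dimension of a measure:
`dim_H^-(μ) = inf {dimH E | E Borel, μ(E) > 0}`. -/
noncomputable def dimHminus (μ : Measure X) : ℝ≥0∞ :=
  ⨅ (E : Set X) (_ : MeasurableSet E) (_ : 0 < μ E), dimH E

/-- The return time `τ_s(x) = inf {k ≥ 1 | T^k x ∈ B(x,s)}`. -/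
noncomputable def tauRet (T : X → X) (s : ℝ) (x : X) : ℕ :=
  sInf {k : ℕ | 0 < k ∧ T^[k] x ∈ ball x s}

/-- The lower recurrence rate `R̲(x) = liminf_{s→0⁺} log τ_s(x) / (-log s)`. -/
noncomputable def Rlower (T : X → X) (x : X) : EReal :=
  liminf (fun s : ℝ =>
    ((Real.log (tauRet T s x : ℝ) / (-Real.log s) : ℝ) : EReal)) (𝓝[>] (0 : ℝ))

open Classical in
/-- The lower local dimension `d̲_μ(x) = liminf_{ε→0⁺} log μ(B(x,ε)) / log ε` when all balls
around `x` have positive measure, and `+∞` otherwise. -/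
noncomputable def dLoc (μ : Measure X) (x : X) : EReal :=
  if (∀ ε > 0, 0 < μ (ball x ε)) then
    liminf (fun ε : ℝ =>
      ((Real.log (μ (ball x ε)).toReal / Real.log ε : ℝ) : EReal)) (𝓝[>] (0 : ℝ))
  else ⊤

/-- The auxiliary continuous kernel `f^ε_x(y)`: equal to `1` if `dist x y ≤ ε`, to
`2 - dist x y / ε` if `ε ≤ dist x y ≤ 2ε`, and to `0` if `dist x y ≥ 2ε`. -/
noncomputable def fker (ε : ℝ) (x y : X) : ℝ :=
  if dist x y ≤ ε then 1 else if dist x y ≤ 2 * ε then 2 - dist x y / ε else 0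

/-- `f_ε(μ, x) = ∫ f^ε_x(y) dμ(y)`. -/
noncomputable def feps (ε : ℝ) (μ : Measure X) (x : X) : ℝ := ∫ y, fker ε x y ∂μ

/-- `G` is a finite covering of `X` by open balls of radius `ε` (given by its finite set of
centers). -/
def IsBallCover (ε : ℝ) (G : Finset X) : Prop := (⋃ x ∈ G, ball x ε) = univ

/-- `S_μ(s,ε) = inf_G ∑_{x ∈ G} μ(B(x,ε))^s`, the infimum running over all finite coverings of
`X` by balls of radius `ε`. -/
noncomputable def Sfun (μ : Measure X) (s ε : ℝ) : ℝ :=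
  ⨅ G : {H : Finset X // IsBallCover ε H}, ∑ x ∈ G.val, (μ (ball x ε)).toReal ^ s

/-- `W_μ(s,ε) = inf_G ∑_{x ∈ G} f_ε(μ,x)^s`, the infimum running over all finite coverings of
`X` by balls of radius `ε`. -/
noncomputable def Wfun (μ : Measure X) (s ε : ℝ) : ℝ :=
  ⨅ G : {H : Finset X // IsBallCover ε H}, ∑ x ∈ G.val, (feps ε μ x) ^ s

/-- The regularized energy function `J_μ(q,ε) = ∫ f_ε(μ,x)^(q-1) dμ(x)`. -/
noncomputable def Jfun (μ : Measure X) (q ε : ℝ) : ℝ :=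
  ∫ x, (feps ε μ x) ^ (q - 1) ∂μ

end Defs

section Shift

variable {M : Type*} [MetricSpace M]

/-- The "cylinder ball" `B^n(x,ε) = {y | d(x_i, y_i) < ε for all |i| ≤ n}` in `M^ℤ`. -/
def cylBall (n : ℕ) (x : ℤ → M) (ε : ℝ) : Set (ℤ → M) :=
  {y : ℤ → M | ∀ i : ℤ, |i| ≤ (n : ℤ) → dist (x i) (y i) < ε}

/-- For `ε ∈ (0,1)`, the largest integer `n ≥ 0` with `ε < 1/(n²+1)`. -/
noncomputable def nZero (ε : ℝ) : ℕ := sSup {n : ℕ | ε < 1 / ((n : ℝ) ^ 2 + 1)}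

/-- The modified energy function `I^n_μ(q,ε) = ∫ μ(B^n(x,ε))^(q-1) dμ(x)`. -/
noncomputable def Icyl [MeasurableSpace (ℤ → M)] (μ : Measure (ℤ → M)) (n : ℕ) (q ε : ℝ) :
    ℝ :=
  ∫ x, (μ (cylBall n x ε)).toReal ^ (q - 1) ∂μ

end Shift


private theorem periodic_liminf {X : Type*} [MetricSpace X] [MeasurableSpace X] [CompactSpace X] [BorelSpace X]
    (T : X → X) (μ : ProbabilityMeasure X) (h : IsPeriodicMeasure T μ)
    (s : ℝ) (hs : s ∈ Ioo (0 : ℝ) 1) :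
    liminf (fun ε : ℝ =>
        ((Real.log (Sfun μ.toMeasure s ε) / ((s - 1) * Real.log ε) : ℝ) : EReal))
      (𝓝[>] (0 : ℝ)) = (0 : EReal) := by
  obtain ⟨x, k, hk, hTx, hμ⟩ := h
  have hk' : (0 : ℝ) < k := Nat.cast_pos.2 hk
  set ν := μ.toMeasure with hν
  -- measure of a set containing an orbit point
  have hmeas_ge : ∀ (B : Set X), MeasurableSet B → x ∈ B → (k : ℝ≥0∞)⁻¹ ≤ ν B := by
    intro B hB hxB
    rw [hμ]
    simp only [Measure.smul_apply, Measure.coe_finset_sum, Finset.sum_apply, smul_eq_mul]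
    have h1 : (1 : ℝ≥0∞) ≤ ∑ i ∈ Finset.range k, Measure.dirac (T^[i] x) B := by
      refine le_trans ?_ (Finset.single_le_sum (f := fun i => Measure.dirac (T^[i] x) B)
        (fun i _ => zero_le) (Finset.mem_range.2 hk))
      show (1:ℝ≥0∞) ≤ Measure.dirac (T^[0] x) B
      rw [Function.iterate_zero_apply, Measure.dirac_apply' _ hB]
      simp [hxB]
    calc (k : ℝ≥0∞)⁻¹ = (k : ℝ≥0∞)⁻¹ * 1 := (mul_one _).symm
      _ ≤ _ := by gcongr
  -- measure of a set disjoint from the orbit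
  have hmeas_zero : ∀ (B : Set X), MeasurableSet B → (∀ i < k, T^[i] x ∉ B) → ν B = 0 := by
    intro B hB hdisj
    rw [hμ]
    simp only [Measure.smul_apply, Measure.coe_finset_sum, Finset.sum_apply, smul_eq_mul]
    have : ∑ i ∈ Finset.range k, Measure.dirac (T^[i] x) B = 0 := by
      refine Finset.sum_eq_zero fun i hi => ?_
      show Measure.dirac (T^[i] x) B = 0
      rw [Measure.dirac_apply' _ hB]
      simp [hdisj i (Finset.mem_range.1 hi)]
    rw [this, mul_zero]
  have hne : ν univ ≠ ⊤ := by simp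
  -- existence of covers
  have hcov : ∀ ε : ℝ, 0 < ε → Nonempty {H : Finset X // IsBallCover ε H} := by
    intro ε hε
    obtain ⟨t, ht⟩ := isCompact_univ.elim_finite_subcover (fun c : X => ball c ε)
      (fun c => isOpen_ball) (fun y _ => mem_iUnion.2 ⟨y, mem_ball_self hε⟩)
    classical
    exact ⟨⟨t, le_antisymm (subset_univ _) (by simpa using ht)⟩⟩
  -- lower bound on Sfun
  have hlow : ∀ ε : ℝ, 0 < ε → ((k : ℝ)⁻¹) ^ s ≤ Sfun ν s ε := by
    intro ε hε
    have := hcov ε hε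
    refine le_ciInf fun G => ?_
    have hx : x ∈ ⋃ c ∈ G.val, ball c ε := G.prop ▸ mem_univ x
    obtain ⟨c, hc, hxc⟩ := mem_iUnion₂.1 hx
    have hball : (k : ℝ)⁻¹ ≤ (ν (ball c ε)).toReal := by
      have h1 := hmeas_ge (ball c ε) measurableSet_ball hxc
      have h2 : ν (ball c ε) ≠ ⊤ := (measure_lt_top ν _).ne
      calc (k : ℝ)⁻¹ = ((k : ℝ≥0∞)⁻¹).toReal := by
            rw [ENNReal.toReal_inv]; simp
        _ ≤ _ := ENNReal.toReal_mono h2 h1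
    calc ((k : ℝ)⁻¹) ^ s ≤ (ν (ball c ε)).toReal ^ s :=
          Real.rpow_le_rpow (by positivity) hball hs.1.le
      _ ≤ _ := Finset.single_le_sum
          (f := fun c => (ν (ball c ε)).toReal ^ s)
          (fun c _ => Real.rpow_nonneg ENNReal.toReal_nonneg _) hc
  -- upper bound on Sfun
  have hup : ∀ ε : ℝ, 0 < ε → Sfun ν s ε ≤ (k : ℝ) := by
    intro ε hε
    classical
    set img : Finset X := (Finset.range k).image (fun i => T^[i] x) with himg
    set K : Set X := (⋃ c ∈ img, ball c ε)ᶜ with hK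
    have hKc : IsCompact K := (isClosed_compl_iff.2 (isOpen_biUnion fun _ _ => isOpen_ball)).isCompact
    obtain ⟨t, ht⟩ := hKc.elim_finite_subcover (fun c : K => ball (c : X) ε)
      (fun c => isOpen_ball)
      (fun y hy => mem_iUnion.2 ⟨⟨y, hy⟩, mem_ball_self hε⟩)
    set G : Finset X := t.image (Subtype.val) ∪ img with hG
    have hGcov : IsBallCover ε G := by
      refine le_antisymm (subset_univ _) fun y _ => ?_
      by_cases hy : y ∈ K
      · obtain ⟨c, hc, hyc⟩ := mem_iUnion₂.1 (ht hy)
        exact mem_iUnion₂.2 ⟨(c : X),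
          Finset.mem_union_left _ (Finset.mem_image.2 ⟨c, hc, rfl⟩), hyc⟩
      · have hy' : y ∈ ⋃ c ∈ img, ball c ε := by
          by_contra hmem
          exact hy hmem
        obtain ⟨c, hc, hyc⟩ := mem_iUnion₂.1 hy'
        exact mem_iUnion₂.2 ⟨c, Finset.mem_union_right _ hc, hyc⟩
    have hsum : ∑ c ∈ G, (ν (ball c ε)).toReal ^ s ≤ (k : ℝ) := by
      have hterm : ∀ c ∈ G, (ν (ball c ε)).toReal ^ s ≤ (if c ∈ img then (1:ℝ) else 0) := by
        intro c hcG
        by_cases hc : c ∈ img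
        · simp only [hc, if_true]
          refine Real.rpow_le_one ENNReal.toReal_nonneg ?_ hs.1.le
          exact ENNReal.toReal_le_of_le_ofReal one_pos.le (by simpa using prob_le_one (μ := ν))
        · simp only [hc, if_false]
          have hcK : c ∈ K := by
            rcases Finset.mem_union.1 hcG with hct | hci
            · obtain ⟨c', hc', rfl⟩ := Finset.mem_image.1 hct
              exact c'.prop
            · exact absurd hci hc
          have : ν (ball c ε) = 0 := by
            refine hmeas_zero _ measurableSet_ball fun i hi hmem => ?_
            have : c ∈ ball (T^[i] x) ε := by
              rwa [mem_ball, dist_comm] at hmem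
            exact hcK (mem_iUnion₂.2 ⟨T^[i] x,
              Finset.mem_image.2 ⟨i, Finset.mem_range.2 hi, rfl⟩, this⟩)
          rw [this]
          simp [Real.zero_rpow (ne_of_gt hs.1)]
      calc ∑ c ∈ G, (ν (ball c ε)).toReal ^ s
          ≤ ∑ c ∈ G, (if c ∈ img then (1:ℝ) else 0) := Finset.sum_le_sum hterm
        _ = ∑ c ∈ G ∩ img, (1:ℝ) := by rw [Finset.sum_ite_mem]
        _ = ((G ∩ img).card : ℝ) := by simp
        _ ≤ (img.card : ℝ) := by
            exact_mod_cast Nat.cast_le.2 (Finset.card_le_card (Finset.inter_subset_right))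
        _ ≤ (k : ℝ) := by
            exact_mod_cast le_trans (Finset.card_image_le) (by simp)
    have hbdd : BddBelow (Set.range fun G : {H : Finset X // IsBallCover ε H} =>
        ∑ c ∈ G.val, (ν (ball c ε)).toReal ^ s) := by
      refine ⟨0, fun y hy => ?_⟩
      obtain ⟨G, rfl⟩ := hy
      exact Finset.sum_nonneg fun c _ => Real.rpow_nonneg ENNReal.toReal_nonneg _
    exact le_trans (ciInf_le hbdd ⟨G, hGcov⟩) hsum
  -- log bounds
  have hlogk : (0:ℝ) ≤ Real.log k := Real.log_nonneg (by exact_mod_cast hk)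
  have hSpos : ∀ ε : ℝ, 0 < ε → 0 < Sfun ν s ε := fun ε hε =>
    lt_of_lt_of_le (Real.rpow_pos_of_pos (by positivity) s) (hlow ε hε)
  have hlogbound : ∀ ε : ℝ, 0 < ε → |Real.log (Sfun ν s ε)| ≤ Real.log k := by
    intro ε hε
    rw [abs_le]
    constructor
    · have h1 : Real.log (((k:ℝ)⁻¹) ^ s) ≤ Real.log (Sfun ν s ε) :=
        Real.log_le_log (Real.rpow_pos_of_pos (by positivity) s) (hlow ε hε)
      have h2 : Real.log (((k:ℝ)⁻¹) ^ s) = -(s * Real.log k) := by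
        rw [Real.log_rpow (by positivity), Real.log_inv]; ring
      nlinarith [hs.1, hs.2]
    · exact le_trans (Real.log_le_log (hSpos ε hε) (hup ε hε)) le_rfl
  -- tendsto of the ratio to 0
  have hb : Tendsto (fun ε : ℝ => (s - 1) * Real.log ε) (𝓝[>] (0:ℝ)) atTop :=
    (tendsto_const_mul_atTop_of_neg (by linarith [hs.2])).2
      Real.tendsto_log_nhdsGT_zero
  have habs : Tendsto (fun ε : ℝ => |(s - 1) * Real.log ε|) (𝓝[>] (0:ℝ)) atTop :=
    (tendsto_abs_atTop_atTop).comp hb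
  have hinv : Tendsto (fun ε : ℝ => |(s - 1) * Real.log ε|⁻¹) (𝓝[>] (0:ℝ)) (𝓝 0) :=
    tendsto_inv_atTop_zero.comp habs
  have hg : Tendsto (fun ε : ℝ => Real.log k * |(s - 1) * Real.log ε|⁻¹) (𝓝[>] (0:ℝ)) (𝓝 0) := by
    simpa using hinv.const_mul (Real.log k)
  have hreal : Tendsto (fun ε : ℝ => Real.log (Sfun ν s ε) / ((s - 1) * Real.log ε))
      (𝓝[>] (0:ℝ)) (𝓝 0) := by
    refine squeeze_zero_norm' ?_ hg
    filter_upwards [self_mem_nhdsWithin] with ε hε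
    rw [Real.norm_eq_abs, abs_div, div_eq_mul_inv, ← abs_inv]
    rw [abs_inv]
    exact mul_le_mul_of_nonneg_right (hlogbound ε hε) (by positivity)
  have : Tendsto (fun ε : ℝ =>
      ((Real.log (Sfun ν s ε) / ((s - 1) * Real.log ε) : ℝ) : EReal)) (𝓝[>] (0:ℝ))
      (𝓝 ((0:ℝ) : EReal)) := by
    exact (continuous_coe_real_ereal.tendsto _).comp hreal
  have := this.liminf_eq
  simpa using this

/-- For a topological dynamical system `(X,T)` with the `T`-periodic
measures dense in `M(T)` and `s ∈ (0,1)`, the set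
`{μ ∈ M(T) | liminf_{ε→0⁺} log S_μ(s,ε)/((s-1) log ε) = 0}` is dense in `M(T)`. -/
theorem statement15 {X : Type*} [MetricSpace X] [CompactSpace X]
    [MeasurableSpace X] [BorelSpace X]
    (T : X → X) (hT : Continuous T)
    (hdense : Dense {μ : ↥(invSet T) | IsPeriodicMeasure T μ.val})
    (s : ℝ) (hs : s ∈ Ioo (0 : ℝ) 1) :
    Dense {μ : ↥(invSet T) |
      liminf (fun ε : ℝ =>
        ((Real.log (Sfun μ.val.toMeasure s ε) / ((s - 1) * Real.log ε) : ℝ) : EReal))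
        (𝓝[>] (0 : ℝ)) = (0 : EReal)} :=
  hdense.mono fun μ hμ => periodic_liminf T μ.val hμ s hs
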